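/- Let G be a locally compact Hausdorff topological group that is c_b-compact. Then every continuous group homomorphism α : G → (ℝ, +) into the additive group of the real numbers is trivial. -/

import Mathlib

open Set Topology

universe u

/-- The Bohr-closure of a subset `S` of a topological group `G`: the set of `g ∈ G` such that
`f g ∈ cl(f(S))` for every continuous homomorphism `f` from `G` into a compact Hausdorff
topological group. -/
def bohrClosure (G : Type u) [Group G] [TopologicalSpace G] (S : Set G) : Set G :=
  {g : G | ∀ (K : Type u) [Group K] [TopologicalSpace K] [IsTopologicalGroup K]
    [CompactSpace K] [T2Space K] (f : G →* K), Continuous f → f g ∈ closure (f '' S)}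

/-- The von Neumann kernel `n(G)` of a topological group `G`. -/
def vonNeumannKernel (G : Type u) [Group G] [TopologicalSpace G] : Set G :=
  bohrClosure G {1}

/-- A topological group `G` is `c_b`-compact if for every topological group `Y` and every
subgroup `S` of `G × Y`, the projection `π_Y` preserves the Bohr-closure. -/
def IsCbCompact (G : Type u) [Group G] [TopologicalSpace G] [IsTopologicalGroup G] : Prop :=
  ∀ (Y : Type u) [Group Y] [TopologicalSpace Y] [IsTopologicalGroup Y] (S : Subgroup (G × Y)),
    Prod.snd '' bohrClosure (G × Y) (S : Set (G × Y)) =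
      bohrClosure Y (Prod.snd '' (S : Set (G × Y)))

/-- `ℤ√2 + ℤ` is dense in `ℝ`. -/
lemma dense_sqrt_two_lattice :
    Dense {x : ℝ | ∃ m n : ℤ, x = m * Real.sqrt 2 + n} := by
  set D : AddSubgroup ℝ :=
    { carrier := {x : ℝ | ∃ m n : ℤ, x = m * Real.sqrt 2 + n}
      zero_mem' := ⟨0, 0, by norm_num⟩
      add_mem' := by
        rintro x y ⟨m, n, rfl⟩ ⟨m', n', rfl⟩
        exact ⟨m + m', n + n', by push_cast; ring⟩
      neg_mem' := by
        rintro x ⟨m, n, rfl⟩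
        exact ⟨-m, -n, by push_cast; ring⟩ } with hD
  have h1 : (1 : ℝ) ∈ D := ⟨0, 1, by norm_num⟩
  have h2 : Real.sqrt 2 ∈ D := ⟨1, 0, by norm_num⟩
  rcases D.dense_or_cyclic with h | ⟨b, hb⟩
  · exact h
  · exfalso
    rw [hb, AddSubgroup.mem_closure_singleton] at h1 h2
    obtain ⟨k, hk⟩ := h1
    obtain ⟨l, hl⟩ := h2
    rw [zsmul_eq_mul] at hk hl
    have hk0 : (k : ℝ) ≠ 0 := by
      intro h; rw [h, zero_mul] at hk; norm_num at hk
    have : Real.sqrt 2 = ((l / k : ℚ) : ℝ) := by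
      push_cast
      field_simp
      rw [← hl, mul_assoc, mul_comm b, hk, mul_one]
    exact Rat.not_irrational _ (this ▸ irrational_sqrt_two)

/-- Every continuous homomorphism from a locally compact Hausdorff `c_b`-compact topological
group into the additive group `(ℝ, +)` is trivial. -/
theorem cbCompact_hom_to_real_trivial (G : Type u) [Group G] [TopologicalSpace G]
    [IsTopologicalGroup G] [LocallyCompactSpace G] [T2Space G]
    (hcb : IsCbCompact G)
    (α : G → ℝ) (hαc : Continuous α) (hα : ∀ x y : G, α (x * y) = α x + α y) :
    ∀ g : G, α g = 0 := by
  by_contra hcon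
  push_neg at hcon
  obtain ⟨g0, hg0⟩ := hcon
  set a : ℝ := α g0 with ha
  -- basic facts about α
  have hα1 : α 1 = 0 := by have h := hα 1 1; rw [one_mul] at h; linarith
  -- the homomorphism α as a `MonoidHom` into `Multiplicative ℝ`
  let A : G →* Multiplicative ℝ :=
    { toFun := fun g => Multiplicative.ofAdd (α g)
      map_one' := by show Multiplicative.ofAdd (α 1) = 1; rw [hα1]; rfl
      map_mul' := fun x y => by
        show Multiplicative.ofAdd (α (x * y)) =
          Multiplicative.ofAdd (α x) * Multiplicative.ofAdd (α y)
        rw [hα x y]; rfl }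
  have hzpow : ∀ m : ℤ, α (g0 ^ m) = m * a := by
    intro m
    have h := congrArg Multiplicative.toAdd (map_zpow A g0 m)
    simpa [A, toAdd_zpow, zsmul_eq_mul] using h
  -- the auxiliary topological group Y = (ℝ, +), lifted
  let Y : Type u := Multiplicative (ULift.{u} ℝ)
  let ι : ℝ → Y := fun x => Multiplicative.ofAdd (ULift.up x)
  have hι_cont : Continuous ι := continuous_ofAdd.comp continuous_uliftUp
  have hι_surj : Function.Surjective ι := fun y => ⟨y.toAdd.down, rfl⟩
  have hι_mul : ∀ x y : ℝ, ι x * ι y = ι (x + y) := fun _ _ => rfl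
  have hι_inv : ∀ x : ℝ, (ι x)⁻¹ = ι (-x) := fun _ => rfl
  have hι_zero : ι 0 = 1 := rfl
  have hY_add : ∀ p q : Y, (p * q).toAdd.down = p.toAdd.down + q.toAdd.down := fun _ _ => rfl
  -- the subgroup S of G × Y
  let S : Subgroup (G × Y) :=
    { carrier := {p | ∃ m n : ℤ, p.1 = g0 ^ m ∧ p.2 = ι (m * Real.sqrt 2 + n)}
      one_mem' := by
        refine ⟨0, 0, by simp, ?_⟩
        have h0 : ((0:ℤ) : ℝ) * Real.sqrt 2 + ((0:ℤ) : ℝ) = 0 := by norm_num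
        rw [Prod.snd_one, h0, hι_zero]
      mul_mem' := by
        rintro p q ⟨m, n, h1, h2⟩ ⟨m', n', h1', h2'⟩
        refine ⟨m + m', n + n', ?_, ?_⟩
        · rw [Prod.fst_mul, h1, h1', ← zpow_add]
        · rw [Prod.snd_mul, h2, h2', hι_mul]
          congr 1
          push_cast
          ring
      inv_mem' := by
        rintro p ⟨m, n, h1, h2⟩
        refine ⟨-m, -n, ?_, ?_⟩
        · rw [Prod.fst_inv, h1, ← zpow_neg]
        · rw [Prod.snd_inv, h2, hι_inv]
          congr 1
          push_cast
          ring }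
  -- the projection of S to Y
  have hproj : Prod.snd '' (S : Set (G × Y)) =
      ι '' {x : ℝ | ∃ m n : ℤ, x = m * Real.sqrt 2 + n} := by
    ext y
    constructor
    · rintro ⟨p, ⟨m, n, h1, h2⟩, rfl⟩
      exact ⟨m * Real.sqrt 2 + n, ⟨m, n, rfl⟩, h2.symm⟩
    · rintro ⟨x, ⟨m, n, rfl⟩, rfl⟩
      exact ⟨(g0 ^ m, ι (m * Real.sqrt 2 + n)), ⟨m, n, rfl, rfl⟩, rfl⟩
  -- the projection is dense in Y
  have hdense : Dense (Prod.snd '' (S : Set (G × Y))) := by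
    rw [hproj]
    exact hι_surj.denseRange.dense_image hι_cont dense_sqrt_two_lattice
  -- hence ι(1/3) is in the Bohr closure of the projection
  have hz1 : ι (1/3) ∈ bohrClosure Y (Prod.snd '' (S : Set (G × Y))) := by
    intro K _ _ _ _ _ f hf
    exact image_closure_subset_closure_image hf ⟨ι (1/3), hdense _, rfl⟩
  rw [← hcb Y S] at hz1
  obtain ⟨⟨g, y⟩, hmem, hy⟩ := hz1
  have hy' : y = ι (1/3) := hy
  subst hy'
  -- now build the compact witness K and the homomorphism f
  haveI : Fact ((0:ℝ) < 1) := ⟨one_pos⟩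
  let K : Type u := Multiplicative (ULift.{u} (AddCircle (1:ℝ) × AddCircle (1:ℝ)))
  haveI : CompactSpace K :=
    inferInstanceAs (CompactSpace (ULift.{u} (AddCircle (1:ℝ) × AddCircle (1:ℝ))))
  haveI : T2Space K :=
    inferInstanceAs (T2Space (ULift.{u} (AddCircle (1:ℝ) × AddCircle (1:ℝ))))
  have hK_mul : ∀ a1 a2 b1 b2 : AddCircle (1:ℝ),
      (Multiplicative.ofAdd (ULift.up (a1, a2)) : K) * Multiplicative.ofAdd (ULift.up (b1, b2)) =
        Multiplicative.ofAdd (ULift.up (a1 + b1, a2 + b2)) := fun _ _ _ _ => rfl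
  have hK_one : (Multiplicative.ofAdd (ULift.up ((0 : AddCircle (1:ℝ)),
      (0 : AddCircle (1:ℝ)))) : K) = 1 := rfl
  let f : (G × Y) →* K :=
    { toFun := fun p => Multiplicative.ofAdd (ULift.up
        (((α p.1 / a : ℝ) : AddCircle (1:ℝ)),
         ((p.2.toAdd.down - Real.sqrt 2 * (α p.1 / a) : ℝ) : AddCircle (1:ℝ))))
      map_one' := by
        show Multiplicative.ofAdd (ULift.up
          (((α (1 : G × Y).1 / a : ℝ) : AddCircle (1:ℝ)),
           (((1 : G × Y).2.toAdd.down - Real.sqrt 2 * (α (1 : G × Y).1 / a) : ℝ)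
             : AddCircle (1:ℝ)))) = 1
        have e1 : α (1 : G × Y).1 / a = 0 := by rw [Prod.fst_one, hα1]; exact zero_div a
        have e2 : (((1 : G × Y).2).toAdd.down : ℝ) = 0 := rfl
        rw [e1, e2]
        have e3 : ((0:ℝ) - Real.sqrt 2 * 0 : ℝ) = 0 := by ring
        rw [e3]
        exact hK_one
      map_mul' := by
        intro p q
        show Multiplicative.ofAdd (ULift.up
          (((α (p * q).1 / a : ℝ) : AddCircle (1:ℝ)),
           (((p * q).2.toAdd.down - Real.sqrt 2 * (α (p * q).1 / a) : ℝ) : AddCircle (1:ℝ)))) =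
          Multiplicative.ofAdd (ULift.up
            (((α p.1 / a : ℝ) : AddCircle (1:ℝ)),
             ((p.2.toAdd.down - Real.sqrt 2 * (α p.1 / a) : ℝ) : AddCircle (1:ℝ)))) *
          Multiplicative.ofAdd (ULift.up
            (((α q.1 / a : ℝ) : AddCircle (1:ℝ)),
             ((q.2.toAdd.down - Real.sqrt 2 * (α q.1 / a) : ℝ) : AddCircle (1:ℝ))))
        have e1 : α (p * q).1 / a = α p.1 / a + α q.1 / a := by
          rw [Prod.fst_mul, hα]; ring
        have e2 : (p * q).2.toAdd.down - Real.sqrt 2 * (α (p * q).1 / a) =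
            (p.2.toAdd.down - Real.sqrt 2 * (α p.1 / a)) +
              (q.2.toAdd.down - Real.sqrt 2 * (α q.1 / a)) := by
          rw [Prod.snd_mul, hY_add, Prod.fst_mul, hα]; ring
        rw [e2, e1, AddCircle.coe_add, AddCircle.coe_add, hK_mul] }
  have hf : Continuous f := by
    refine (continuous_ofAdd.comp (continuous_uliftUp.comp ?_))
    refine Continuous.prodMk ?_ ?_
    · exact (AddCircle.continuous_mk' 1).comp ((hαc.comp continuous_fst).div_const a)
    · refine (AddCircle.continuous_mk' 1).comp ?_
      exact ((continuous_uliftDown.comp (continuous_toAdd.comp continuous_snd))).sub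
        (continuous_const.mul ((hαc.comp continuous_fst).div_const a))
  -- f maps S to {1}
  have himg : ⇑f '' (S : Set (G × Y)) ⊆ {1} := by
    rintro _ ⟨p, ⟨m, n, h1, h2⟩, rfl⟩
    have hx1 : α p.1 / a = (m : ℝ) := by rw [h1, hzpow m]; field_simp
    have hx2 : p.2.toAdd.down = (m : ℝ) * Real.sqrt 2 + n := by rw [h2]; rfl
    show Multiplicative.ofAdd (ULift.up
        (((α p.1 / a : ℝ) : AddCircle (1:ℝ)),
         ((p.2.toAdd.down - Real.sqrt 2 * (α p.1 / a) : ℝ) : AddCircle (1:ℝ)))) ∈ ({1} : Set K)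
    rw [hx1, hx2]
    have c1 : (((m : ℝ)) : AddCircle (1:ℝ)) = 0 :=
      (AddCircle.coe_eq_zero_iff (1:ℝ)).mpr ⟨m, by simp⟩
    have c2 : (((m : ℝ) * Real.sqrt 2 + n - Real.sqrt 2 * (m : ℝ) : ℝ) : AddCircle (1:ℝ)) = 0 := by
      have e : ((m : ℝ) * Real.sqrt 2 + n - Real.sqrt 2 * (m : ℝ) : ℝ) = (n : ℝ) := by ring
      rw [e]
      exact (AddCircle.coe_eq_zero_iff (1:ℝ)).mpr ⟨n, by simp⟩
    rw [c1, c2]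
    exact hK_one
  -- apply the Bohr-closure membership
  have hmain := hmem K f hf
  have hone : f (g, ι (1/3)) = 1 := by
    have hsub : closure (⇑f '' (S : Set (G × Y))) ⊆ {1} :=
      closure_minimal himg isClosed_singleton
    exact hsub hmain
  -- extract the two congruences
  have hone' : Multiplicative.ofAdd (ULift.up
      (((α g / a : ℝ) : AddCircle (1:ℝ)),
       (((ι (1/3) : Y).toAdd.down - Real.sqrt 2 * (α g / a) : ℝ) : AddCircle (1:ℝ)))) = (1 : K) :=
    hone
  have hpair := congrArg (fun k : K => k.toAdd.down) hone'
  have c1 : ((α g / a : ℝ) : AddCircle (1:ℝ)) = 0 := congrArg Prod.fst hpair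
  have c2 : (((ι (1/3) : Y).toAdd.down - Real.sqrt 2 * (α g / a) : ℝ) : AddCircle (1:ℝ)) = 0 :=
    congrArg Prod.snd hpair
  have hdown : ((ι (1/3) : Y).toAdd.down : ℝ) = (1/3 : ℝ) := rfl
  rw [hdown] at c2
  rw [AddCircle.coe_eq_zero_iff] at c1 c2
  obtain ⟨p, hp⟩ := c1
  obtain ⟨q, hq⟩ := c2
  rw [zsmul_eq_mul, mul_one] at hp hq
  rw [← hp] at hq
  -- hq : (q : ℝ) = 1/3 - √2 * p
  by_cases hp0 : p = 0
  · rw [hp0] at hq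
    push_cast at hq
    have h3 : ((3 * q : ℤ) : ℝ) = ((1 : ℤ) : ℝ) := by push_cast; linarith
    have := Int.cast_injective h3
    omega
  · have hpr : (p : ℝ) ≠ 0 := Int.cast_ne_zero.mpr hp0
    have hsqrt : Real.sqrt 2 = (((1/3 - (q : ℚ)) / (p : ℚ) : ℚ) : ℝ) := by
      push_cast
      field_simp
      linarith [hq]
    exact Rat.not_irrational _ (hsqrt ▸ irrational_sqrt_two)
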